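/- Let 0 < α < 2, h > 0, x ∈ ℝ, and let u : ℝ → ℝ be four times differentiable on [x−h, x+h] with |u''''(ξ)| ≤ M₄ for all ξ ∈ [x−h, x+h]. Then |C₁,α ∫_0^h (2u(x) − u(x+y) − u(x−y)) y^{−1−α} dy + C₁,α (u(x+h) − 2u(x) + u(x−h)) / ((2−α) h^α)| ≤ C₁,α · (M₄/12) · h^{4−α} · (1/(4−α) + 1/(2−α)). In particular, the three-point centered difference approximates the singular part of the fractional Laplacian integral with error O(h^{4−α}). -/

import Mathlib

open MeasureTheory intervalIntegral

/-- If `f 0 = 0` and `|f'| ≤ c t^k` on `[0,h]`, then `|f t| ≤ c/(k+1) t^(k+1)`. -/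
lemma poly_deriv_bound {h : ℝ} {f f' : ℝ → ℝ} {c : ℝ} {k : ℕ}
    (hf : ∀ t ∈ Set.Icc (0:ℝ) h, HasDerivWithinAt f (f' t) (Set.Icc (0:ℝ) h) t)
    (h0 : f 0 = 0) (hb : ∀ t ∈ Set.Icc (0:ℝ) h, |f' t| ≤ c * t ^ k) :
    ∀ t ∈ Set.Icc (0:ℝ) h, |f t| ≤ c / (k + 1) * t ^ (k + 1) := by
  have hB : ∀ s : ℝ, HasDerivAt (fun s => c / (k+1) * s ^ (k+1)) (c * s ^ k) s := by
    intro s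
    have := (hasDerivAt_pow (k+1) s).const_mul (c / (k+1))
    refine this.congr_deriv ?_
    have : ((k:ℝ) + 1) ≠ 0 := by positivity
    push_cast
    field_simp
  intro t ht
  have := image_norm_le_of_norm_deriv_right_le_deriv_boundary
    (f := f) (f' := f') (a := 0) (b := h)
    (fun s hs => (hf s hs).continuousWithinAt)
    (fun s hs => (hf s (Set.Ico_subset_Icc_self hs)).mono_of_mem_nhdsWithin
      (Icc_mem_nhdsGE_of_mem hs))
    (B := fun s => c / (k+1) * s ^ (k+1)) (B' := fun s => c * s ^ k)
    (by simp [h0]) hB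
    (fun s hs => hb s (Set.Ico_subset_Icc_self hs)) ht
  simpa using this

/-- The normalizing constant `C_{1,α}` of the one-dimensional fractional Laplacian. -/
noncomputable def Cna (α : ℝ) : ℝ :=
  α * 2 ^ (α - 1) * Real.Gamma ((α + 1) / 2) / (Real.sqrt Real.pi * Real.Gamma ((2 - α) / 2))

/-- The three-point centered difference approximates the singular part of the fractional
Laplacian integral with error `O(h^{4−α})`: if `u` is four times differentiable on
`[x−h, x+h]` with `|u''''| ≤ M₄` there, then
`|C₁,α ∫_0^h (2u(x) − u(x+y) − u(x−y)) y^{−1−α} dy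
   + C₁,α (u(x+h) − 2u(x) + u(x−h))/((2−α) h^α)|
 ≤ C₁,α (M₄/12) h^{4−α} (1/(4−α) + 1/(2−α))`. -/
theorem singular_part_centered_difference (α : ℝ) (hα0 : 0 < α) (hα2 : α < 2)
    (h : ℝ) (hh : 0 < h) (x M4 : ℝ)
    (u u1 u2 u3 u4 : ℝ → ℝ)
    (hu1 : ∀ y ∈ Set.Icc (x - h) (x + h), HasDerivWithinAt u (u1 y) (Set.Icc (x - h) (x + h)) y)
    (hu2 : ∀ y ∈ Set.Icc (x - h) (x + h), HasDerivWithinAt u1 (u2 y) (Set.Icc (x - h) (x + h)) y)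
    (hu3 : ∀ y ∈ Set.Icc (x - h) (x + h), HasDerivWithinAt u2 (u3 y) (Set.Icc (x - h) (x + h)) y)
    (hu4 : ∀ y ∈ Set.Icc (x - h) (x + h), HasDerivWithinAt u3 (u4 y) (Set.Icc (x - h) (x + h)) y)
    (hM4 : ∀ y ∈ Set.Icc (x - h) (x + h), |u4 y| ≤ M4) :
    |Cna α * (∫ y in (0:ℝ)..h, (2 * u x - u (x + y) - u (x - y)) * y ^ (-1 - α))
        + Cna α * (u (x + h) - 2 * u x + u (x - h)) / ((2 - α) * h ^ α)|
      ≤ Cna α * (M4 / 12) * h ^ (4 - α) * (1 / (4 - α) + 1 / (2 - α)) := by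
  set A := Set.Icc (x - h) (x + h) with hA
  set S := Set.Icc (0:ℝ) h with hS
  have hα2' : (0:ℝ) < 2 - α := by linarith
  have hα4 : (0:ℝ) < 4 - α := by linarith
  have hcomp : ∀ (v dv : ℝ → ℝ), (∀ y ∈ A, HasDerivWithinAt v (dv y) A y) →
      ∀ t ∈ S, HasDerivWithinAt (fun s => v (x + s)) (dv (x + t)) S t ∧
        HasDerivWithinAt (fun s => v (x - s)) (-dv (x - t)) S t := by
    intro v dv hv t ht
    simp only [hS, Set.mem_Icc] at ht
    have hmemp : x + t ∈ A := by
      simp only [hA, Set.mem_Icc]; constructor <;> linarith [ht.1, ht.2]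
    have hmemm : x - t ∈ A := by
      simp only [hA, Set.mem_Icc]; constructor <;> linarith [ht.1, ht.2]
    have hmapsp : Set.MapsTo (fun s => x + s) S A := by
      intro s hs; simp only [hS, Set.mem_Icc] at hs
      simp only [hA, Set.mem_Icc]; constructor <;> linarith [hs.1, hs.2]
    have hmapsm : Set.MapsTo (fun s => x - s) S A := by
      intro s hs; simp only [hS, Set.mem_Icc] at hs
      simp only [hA, Set.mem_Icc]; constructor <;> linarith [hs.1, hs.2]
    constructor
    · have := (hv _ hmemp).comp t ((hasDerivWithinAt_id t S).const_add x) hmapsp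
      simpa [Function.comp_def] using this
    · have := (hv _ hmemm).comp t ((hasDerivWithinAt_id t S).const_sub x) hmapsm
      simpa [Function.comp_def] using this
  -- the remainder function and its derivatives
  set r : ℝ → ℝ := fun t => 2 * u x - u (x + t) - u (x - t) + u2 x * t ^ 2 with hrdef
  set r1 : ℝ → ℝ := fun t => -u1 (x + t) + u1 (x - t) + 2 * u2 x * t with hr1def
  set r2 : ℝ → ℝ := fun t => -u2 (x + t) - u2 (x - t) + 2 * u2 x with hr2def
  set r3 : ℝ → ℝ := fun t => -u3 (x + t) + u3 (x - t) with hr3def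
  set r4 : ℝ → ℝ := fun t => -u4 (x + t) - u4 (x - t) with hr4def
  have hD : ∀ t ∈ S, HasDerivWithinAt r (r1 t) S t ∧ HasDerivWithinAt r1 (r2 t) S t ∧
      HasDerivWithinAt r2 (r3 t) S t ∧ HasDerivWithinAt r3 (r4 t) S t := by
    intro t ht
    obtain ⟨p0, m0⟩ := hcomp u u1 hu1 t ht
    obtain ⟨p1, m1⟩ := hcomp u1 u2 hu2 t ht
    obtain ⟨p2, m2⟩ := hcomp u2 u3 hu3 t ht
    obtain ⟨p3, m3⟩ := hcomp u3 u4 hu4 t ht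
    refine ⟨?_, ?_, ?_, ?_⟩
    · have := (((hasDerivWithinAt_const t S (2 * u x)).sub p0).sub m0).add
        (((hasDerivAt_pow 2 t).hasDerivWithinAt).const_mul (u2 x))
      refine this.congr_deriv ?_; simp [hr1def]; try ring
    · have := ((p1.neg.add m1)).add
        (((hasDerivAt_id t).hasDerivWithinAt).const_mul (2 * u2 x))
      refine this.congr_deriv ?_; simp [hr2def]; try ring
    · have := ((p2.neg.sub m2)).add (hasDerivWithinAt_const t S (2 * u2 x))
      refine this.congr_deriv ?_; simp [hr3def]; try ring
    · have := p3.neg.add m3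
      refine this.congr_deriv ?_; simp [hr4def]; ring
  -- bound on the fourth "derivative"
  have hM4' : (0:ℝ) ≤ M4 :=
    le_trans (abs_nonneg _) (hM4 x ⟨by linarith, by linarith⟩)
  have hb4 : ∀ t ∈ S, |r4 t| ≤ (2 * M4) * t ^ 0 := by
    intro t ht
    simp only [hS, Set.mem_Icc] at ht
    have hmemp : x + t ∈ A := by
      simp only [hA, Set.mem_Icc]; constructor <;> linarith [ht.1, ht.2]
    have hmemm : x - t ∈ A := by
      simp only [hA, Set.mem_Icc]; constructor <;> linarith [ht.1, ht.2]
    have h1 := hM4 _ hmemp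
    have h2 := hM4 _ hmemm
    have : |r4 t| ≤ |u4 (x + t)| + |u4 (x - t)| := by
      have e : r4 t = -(u4 (x + t) + u4 (x - t)) := by simp [hr4def]; ring
      rw [e, abs_neg]; exact abs_add_le _ _
    simpa using le_trans this (by linarith)
  -- iterated mean value bounds
  have hr_bound : ∀ t ∈ S, |r t| ≤ M4 / 12 * t ^ 4 := by
    have b3 := poly_deriv_bound (fun t ht => (hD t ht).2.2.2) (by simp [hr3def]) hb4
    have b2 := poly_deriv_bound (fun t ht => (hD t ht).2.2.1) (by simp [hr2def]; ring) b3
    have b1 := poly_deriv_bound (fun t ht => (hD t ht).2.1) (by simp [hr1def]) b2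
    have b0 := poly_deriv_bound (fun t ht => (hD t ht).1) (by simp [hrdef]; ring) b1
    intro t ht
    have := b0 t ht
    norm_num at this ⊢
    convert this using 2
    ring
  -- continuity of r
  have hrc : ContinuousOn r S := fun t ht => ((hD t ht).1).continuousWithinAt
  have hIoc : Set.Ioc (0:ℝ) h ⊆ S := Set.Ioc_subset_Icc_self
  -- integrability facts
  have I1 : IntervalIntegrable (fun y : ℝ => y ^ (1 - α)) volume 0 h :=
    intervalIntegrable_rpow' (by linarith)
  have I3 : IntervalIntegrable (fun y : ℝ => y ^ (3 - α)) volume 0 h :=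
    intervalIntegrable_rpow' (by linarith)
  have hg : IntegrableOn (fun y : ℝ => M4 / 12 * y ^ (3 - α)) (Set.Ioc 0 h) volume :=
    (intervalIntegrable_iff_integrableOn_Ioc_of_le hh.le).mp (I3.const_mul (M4 / 12))
  have hcont : ContinuousOn (fun y : ℝ => r y * y ^ (-1 - α)) (Set.Ioc 0 h) :=
    (hrc.mono hIoc).mul (ContinuousOn.rpow_const continuousOn_id
      (fun y hy => Or.inl (ne_of_gt hy.1)))
  have hbb : ∀ y ∈ Set.Ioc (0:ℝ) h, ‖r y * y ^ (-1 - α)‖ ≤ M4 / 12 * y ^ (3 - α) := by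
    intro y hy
    have hy0 : 0 < y := hy.1
    have h1 : |r y| ≤ M4 / 12 * y ^ 4 := hr_bound y (hIoc hy)
    have h2 : (0:ℝ) ≤ y ^ (-1 - α) := Real.rpow_nonneg hy0.le _
    calc ‖r y * y ^ (-1 - α)‖ = |r y| * y ^ (-1 - α) := by
          rw [norm_mul, Real.norm_eq_abs, Real.norm_eq_abs, abs_of_nonneg h2]
      _ ≤ (M4 / 12 * y ^ 4) * y ^ (-1 - α) := mul_le_mul_of_nonneg_right h1 h2
      _ = M4 / 12 * y ^ (3 - α) := by
          rw [mul_assoc]; congr 1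
          rw [← Real.rpow_natCast y 4, ← Real.rpow_add hy0]
          norm_num
          rw [show (4:ℝ) + (-1 - α) = 3 - α by ring]
  have I2 : IntervalIntegrable (fun y : ℝ => r y * y ^ (-1 - α)) volume 0 h := by
    rw [intervalIntegrable_iff_integrableOn_Ioc_of_le hh.le]
    exact Integrable.mono' hg (hcont.aestronglyMeasurable measurableSet_Ioc)
      ((ae_restrict_iff' measurableSet_Ioc).2 (ae_of_all _ hbb))
  -- splitting the integral
  have key : (∫ y in (0:ℝ)..h, (2 * u x - u (x + y) - u (x - y)) * y ^ (-1 - α))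
      = (∫ y in (0:ℝ)..h, -(u2 x) * y ^ (1 - α)) + ∫ y in (0:ℝ)..h, r y * y ^ (-1 - α) := by
    rw [← intervalIntegral.integral_add (I1.const_mul _) I2]
    rw [intervalIntegral.integral_of_le hh.le, intervalIntegral.integral_of_le hh.le]
    apply setIntegral_congr_fun measurableSet_Ioc
    intro y hy
    have hy0 : 0 < y := hy.1
    have e1 : (2 * u x - u (x + y) - u (x - y)) = -(u2 x) * y ^ 2 + r y := by
      simp [hrdef]
    have e2 : (y:ℝ) ^ (2:ℕ) * y ^ (-1 - α) = y ^ (1 - α) := by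
      rw [← Real.rpow_natCast y 2, ← Real.rpow_add hy0]
      norm_num
      rw [show (2:ℝ) + (-1 - α) = 1 - α by ring]
    show (2 * u x - u (x + y) - u (x - y)) * y ^ (-1 - α)
        = -(u2 x) * y ^ (1 - α) + r y * y ^ (-1 - α)
    rw [e1, add_mul, mul_assoc, e2]
  -- evaluating the power integrals
  have E1 : (∫ y in (0:ℝ)..h, y ^ (1 - α)) = h ^ (2 - α) / (2 - α) := by
    rw [integral_rpow (Or.inl (by linarith))]
    rw [Real.zero_rpow (by intro hc; rw [show (1:ℝ) - α + 1 = 2 - α by ring] at hc; linarith)]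
    rw [show (1:ℝ) - α + 1 = 2 - α by ring, sub_zero]
  have E3 : (∫ y in (0:ℝ)..h, y ^ (3 - α)) = h ^ (4 - α) / (4 - α) := by
    rw [integral_rpow (Or.inl (by linarith))]
    rw [Real.zero_rpow (by intro hc; rw [show (3:ℝ) - α + 1 = 4 - α by ring] at hc; linarith)]
    rw [show (3:ℝ) - α + 1 = 4 - α by ring, sub_zero]
  -- bound on the remainder integral
  set J := ∫ y in (0:ℝ)..h, r y * y ^ (-1 - α) with hJdef
  have hJ : |J| ≤ M4 / 12 * (h ^ (4 - α) / (4 - α)) := by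
    have hb : ∀ᵐ t ∂(volume.restrict (Set.Ioc (0:ℝ) h)),
        ‖r t * t ^ (-1 - α)‖ ≤ M4 / 12 * t ^ (3 - α) :=
      (ae_restrict_iff' measurableSet_Ioc).2 (ae_of_all _ hbb)
    have := MeasureTheory.norm_integral_le_of_norm_le hg hb
    rw [hJdef, intervalIntegral.integral_of_le hh.le]
    rw [Real.norm_eq_abs] at this
    refine le_trans this (le_of_eq ?_)
    rw [← intervalIntegral.integral_of_le hh.le, intervalIntegral.integral_const_mul, E3]
  -- bound on r h
  have hrh : |r h| ≤ M4 / 12 * h ^ 4 := hr_bound h ⟨hh.le, le_refl h⟩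
  -- positivity facts
  have hC : 0 ≤ Cna α := by
    unfold Cna
    apply div_nonneg
    · apply mul_nonneg (mul_nonneg hα0.le (Real.rpow_nonneg (by norm_num) _))
      exact (Real.Gamma_pos_of_pos (by linarith)).le
    · exact mul_nonneg (Real.sqrt_nonneg _) (Real.Gamma_pos_of_pos (by linarith)).le
  have hhα : (0:ℝ) < h ^ α := Real.rpow_pos_of_pos hh _
  have hden : (0:ℝ) < (2 - α) * h ^ α := mul_pos hα2' hhα
  -- the centered difference in terms of r
  have hdiff : u (x + h) - 2 * u x + u (x - h) = u2 x * h ^ 2 - r h := by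
    simp [hrdef]; ring
  have hpow2 : (h:ℝ) ^ (2:ℕ) = h ^ (2 - α) * h ^ α := by
    rw [← Real.rpow_natCast h 2, ← Real.rpow_add hh]; norm_num
  have hpow4 : (h:ℝ) ^ (4:ℕ) = h ^ (4 - α) * h ^ α := by
    rw [← Real.rpow_natCast h 4, ← Real.rpow_add hh]; norm_num
  -- rewrite the whole expression
  have main_eq : Cna α * (∫ y in (0:ℝ)..h, (2 * u x - u (x + y) - u (x - y)) * y ^ (-1 - α))
        + Cna α * (u (x + h) - 2 * u x + u (x - h)) / ((2 - α) * h ^ α)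
      = Cna α * (J - r h / ((2 - α) * h ^ α)) := by
    rw [key, intervalIntegral.integral_const_mul, E1, hdiff]
    have h2α : (2:ℝ) - α ≠ 0 := ne_of_gt hα2'
    have hhα' : (h:ℝ) ^ α ≠ 0 := ne_of_gt hhα
    field_simp
    rw [hpow2]
    ring
  rw [main_eq]
  -- final estimate
  have habs : |Cna α * (J - r h / ((2 - α) * h ^ α))|
      ≤ Cna α * (|J| + |r h| / ((2 - α) * h ^ α)) := by
    rw [abs_mul, abs_of_nonneg hC]
    apply mul_le_mul_of_nonneg_left _ hC
    refine le_trans (abs_sub _ _) ?_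
    rw [abs_div, abs_of_nonneg hden.le]
  refine le_trans habs ?_
  have h1 : |J| + |r h| / ((2 - α) * h ^ α)
      ≤ M4 / 12 * (h ^ (4 - α) / (4 - α)) + (M4 / 12 * h ^ 4) / ((2 - α) * h ^ α) := by
    gcongr
  refine le_trans (mul_le_mul_of_nonneg_left h1 hC) (le_of_eq ?_)
  have h2α : (2:ℝ) - α ≠ 0 := ne_of_gt hα2'
  have h4α : (4:ℝ) - α ≠ 0 := ne_of_gt hα4
  have hhα' : (h:ℝ) ^ α ≠ 0 := ne_of_gt hhα
  field_simp
  rw [hpow4]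
  ring
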